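/- With notation as in the context, the subset A is a deformation retract of KV_q(m_1,…,m_p): there exist a continuous retraction ρ : KV_q(m_1,…,m_p) → A with ρ|_A = id and a continuous homotopy H : KV_q(m_1,…,m_p) × [0,1] → KV_q(m_1,…,m_p) from the identity map to the composition of ρ with the inclusion A ↪ KV_q(m_1,…,m_p). In particular, the inclusion A ↪ KV_q(m_1,…,m_p) is a homotopy equivalence. -/

import Mathlib

open scoped ENNReal

noncomputable section

namespace KVFlow

/-- The ambient product `(∏_{i=1}^p ∏_{m_i−w ≤ j < m_i} [0,∞]) × (∏_{q ≤ j ≤ w+q} [0,∞])`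
with the product topology. -/
abbrev KVAmb (p : ℕ) (m : Fin p → ℤ) (q w : ℤ) : Type :=
  ((i : Fin p) → {j : ℤ // m i - w ≤ j ∧ j < m i} → ℝ≥0∞) ×
    ({j : ℤ // q ≤ j ∧ j ≤ w + q} → ℝ≥0∞)

/-- `KV_q(m_1,…,m_p)`: the tuples `(x^1,…,x^p,y)` for which there exist integers
`r_0, r_1, …, r_p` with `q ≤ r_0 ≤ w+q`, `m_i − w ≤ r_i ≤ m_i` and `r_1 + ⋯ + r_p ≥ r_0`,
such that `x^i_j = 0` for `j < r_i`, `y_j = 0` for `j > r_0`, and `y_j = ∞` for at least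
one `j`. -/
def KVSet (p : ℕ) (m : Fin p → ℤ) (q w : ℤ) : Set (KVAmb p m q w) :=
  {k | ∃ (r0 : ℤ) (r : Fin p → ℤ),
    q ≤ r0 ∧ r0 ≤ w + q ∧ (∀ i, m i - w ≤ r i ∧ r i ≤ m i) ∧ r0 ≤ ∑ i, r i ∧
    (∀ (i : Fin p) (j : {j : ℤ // m i - w ≤ j ∧ j < m i}), (j : ℤ) < r i → k.1 i j = 0) ∧
    (∀ j : {j : ℤ // q ≤ j ∧ j ≤ w + q}, r0 < (j : ℤ) → k.2 j = 0) ∧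
    (∃ j, k.2 j = ∞)}

/-- The subset `A ⊆ KV_q(m_1,…,m_p)`: the tuples `(x^1,…,x^p,y)` with `y_q = ∞`,
`y_j = 0` for all `j ≠ q`, and such that there exist integers `q_1, …, q_p` with
`q_1 + ⋯ + q_p = q`, `m_i − w ≤ q_i ≤ m_i`, and `x^i_j = 0` for all `j < q_i`. -/
def KVA (p : ℕ) (m : Fin p → ℤ) (q w : ℤ) : Set (KVAmb p m q w) :=
  {k | (∀ j : {j : ℤ // q ≤ j ∧ j ≤ w + q},
        ((j : ℤ) = q → k.2 j = ∞) ∧ ((j : ℤ) ≠ q → k.2 j = 0)) ∧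
    ∃ qs : Fin p → ℤ, (∑ i, qs i) = q ∧ (∀ i, m i - w ≤ qs i ∧ qs i ≤ m i) ∧
      (∀ (i : Fin p) (j : {j : ℤ // m i - w ≤ j ∧ j < m i}), (j : ℤ) < qs i → k.1 i j = 0)}

/-- The boundary `∂KV_q(m_1,…,m_p)`: tuples with `x^i_j = ∞` for at least one pair
`(i,j)`. -/
def KVBd (p : ℕ) (m : Fin p → ℤ) (q w : ℤ) : Set (KVAmb p m q w) :=
  {k | ∃ i j, k.1 i j = ∞}

end KVFlow

open KVFlow

noncomputable def phi : unitInterval → ℝ≥0∞ :=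
  fun t => ENNReal.orderIsoUnitIntervalBirational.symm t
lemma phi_continuous : Continuous phi :=
  ENNReal.orderIsoUnitIntervalBirational.symm.toHomeomorph.continuous
lemma phi_eq_top {s : unitInterval} (h : (s : ℝ) = 1) : phi s = ⊤ := by
  unfold phi
  rw [OrderIso.symm_apply_eq]
  ext
  rw [h, ENNReal.orderIsoUnitIntervalBirational_apply_coe]
  simp
lemma phi_eq_zero {s : unitInterval} (h : (s : ℝ) = 0) : phi s = 0 := by
  unfold phi
  rw [OrderIso.symm_apply_eq]
  ext
  rw [h, ENNReal.orderIsoUnitIntervalBirational_apply_coe]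
  simp
noncomputable def alphaF (t : unitInterval) : ℝ≥0∞ :=
  phi ⟨min (2 * (t : ℝ)) 1, ⟨le_min (by nlinarith [t.2.1]) zero_le_one, min_le_right _ _⟩⟩
noncomputable def betaF (t : unitInterval) : ℝ≥0∞ :=
  phi ⟨min (2 * (1 - (t : ℝ))) 1,
    ⟨le_min (by nlinarith [t.2.2]) zero_le_one, min_le_right _ _⟩⟩
lemma alphaF_continuous : Continuous alphaF :=
  phi_continuous.comp (Continuous.subtype_mk
    ((continuous_const.mul continuous_subtype_val).min continuous_const) _)
lemma betaF_continuous : Continuous betaF :=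
  phi_continuous.comp (Continuous.subtype_mk
    ((continuous_const.mul (continuous_const.sub continuous_subtype_val)).min
      continuous_const) _)
lemma alphaF_zero : alphaF 0 = 0 := phi_eq_zero (by norm_num)
lemma alphaF_top {t : unitInterval} (h : 1 ≤ 2 * (t : ℝ)) : alphaF t = ⊤ :=
  phi_eq_top (by simp [min_eq_right h])
lemma betaF_top {t : unitInterval} (h : 2 * (t : ℝ) ≤ 1) : betaF t = ⊤ :=
  phi_eq_top (by simp; nlinarith)
lemma betaF_one : betaF 1 = 0 := phi_eq_zero (by norm_num)

lemma exists_mid : ∀ (p : ℕ) (a b : Fin p → ℤ) (q : ℤ), (∀ i, a i ≤ b i) →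
    (∑ i, a i) ≤ q → q ≤ ∑ i, b i →
    ∃ c : Fin p → ℤ, (∀ i, a i ≤ c i ∧ c i ≤ b i) ∧ ∑ i, c i = q := by
  intro p
  induction p with
  | zero =>
    intro a b q _ h1 h2
    refine ⟨a, fun i => i.elim0, ?_⟩
    simp only [Finset.univ_eq_empty, Finset.sum_empty] at h1 h2 ⊢
    omega
  | succ n ih =>
    intro a b q hab h1 h2
    rw [Fin.sum_univ_succ] at h1 h2
    have hs : ∑ i : Fin n, a i.succ ≤ ∑ i : Fin n, b i.succ :=
      Finset.sum_le_sum fun i _ => hab _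
    set c0 := min (b 0) (q - ∑ i : Fin n, a i.succ) with hc0
    have hc0b : c0 ≤ b 0 := min_le_left _ _
    have hc0a : a 0 ≤ c0 := le_min (hab 0) (by linarith)
    have hc0u : c0 ≤ q - ∑ i : Fin n, a i.succ := min_le_right _ _
    have hc0l : q - ∑ i : Fin n, b i.succ ≤ c0 := le_min (by linarith) (by linarith)
    obtain ⟨c', hc', hsum⟩ := ih (fun i => a i.succ) (fun i => b i.succ) (q - c0)
      (fun i => hab _) (by linarith) (by linarith)
    refine ⟨Fin.cons c0 c', ?_, ?_⟩
    · intro i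
      refine Fin.cases ⟨hc0a, hc0b⟩ (fun j => by simpa using hc' j) i
    · rw [Fin.sum_univ_succ]
      simp only [Fin.cons_zero, Fin.cons_succ]
      rw [hsum]
      ring

variable {p : ℕ} {m : Fin p → ℤ} {q w : ℤ}

/-- The retraction on the ambient space. -/
noncomputable def rhoAmb (p : ℕ) (m : Fin p → ℤ) (q w : ℤ) :
    KVAmb p m q w → KVAmb p m q w :=
  fun k => (k.1, fun j => if (j : ℤ) = q then ∞ else 0)

/-- The homotopy on the ambient space. -/
noncomputable def HAmb (p : ℕ) (m : Fin p → ℤ) (q w : ℤ) :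
    KVAmb p m q w × unitInterval → KVAmb p m q w :=
  fun kt => (kt.1.1, fun j => if (j : ℤ) = q then max (kt.1.2 j) (alphaF kt.2)
      else min (kt.1.2 j) (betaF kt.2))

lemma rhoAmb_continuous : Continuous (rhoAmb p m q w) :=
  Continuous.prodMk continuous_fst continuous_const

lemma HAmb_continuous : Continuous (HAmb p m q w) := by
  refine Continuous.prodMk (continuous_fst.comp continuous_fst) (continuous_pi fun j => ?_)
  split_ifs
  · exact ((continuous_apply j).comp (continuous_snd.comp continuous_fst)).max
      (alphaF_continuous.comp continuous_snd)
  · exact ((continuous_apply j).comp (continuous_snd.comp continuous_fst)).min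
      (betaF_continuous.comp continuous_snd)

lemma HAmb_zero (k : KVAmb p m q w) : HAmb p m q w (k, 0) = k := by
  obtain ⟨kx, ky⟩ := k
  refine Prod.ext rfl (funext fun j => ?_)
  simp only [HAmb]
  split_ifs
  · rw [alphaF_zero]; exact max_eq_left zero_le
  · rw [betaF_top (by norm_num)]; exact min_eq_left le_top

lemma HAmb_one (k : KVAmb p m q w) : HAmb p m q w (k, 1) = rhoAmb p m q w k := by
  obtain ⟨kx, ky⟩ := k
  refine Prod.ext rfl (funext fun j => ?_)
  simp only [HAmb, rhoAmb]
  split_ifs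
  · rw [alphaF_top (by norm_num)]; exact max_eq_right le_top
  · rw [betaF_one]; exact min_eq_right zero_le

lemma HAmb_mem (hw0 : 0 ≤ w) {k : KVAmb p m q w} (hk : k ∈ KVSet p m q w)
    (t : unitInterval) : HAmb p m q w (k, t) ∈ KVSet p m q w := by
  obtain ⟨r0, r, h1, h2, h3, h4, h5, h6, j0, hj0⟩ := hk
  refine ⟨r0, r, h1, h2, h3, h4, h5, ?_, ?_⟩
  · intro j hj
    simp only [HAmb]
    rw [if_neg (by omega), h6 j hj]
    exact min_eq_left zero_le
  · by_cases ht : 2 * (t : ℝ) ≤ 1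
    · refine ⟨j0, ?_⟩
      simp only [HAmb]
      split_ifs
      · rw [hj0]; exact max_eq_left le_top
      · rw [hj0, betaF_top ht]; exact min_eq_left le_top
    · refine ⟨⟨q, le_refl q, by linarith⟩, ?_⟩
      have ha : alphaF t = ⊤ := alphaF_top (by linarith)
      simp [HAmb, ha]

lemma rhoAmb_mem (hw0 : 0 ≤ w) {k : KVAmb p m q w} (hk : k ∈ KVSet p m q w) :
    rhoAmb p m q w k ∈ KVSet p m q w := by
  have := HAmb_mem hw0 hk 1
  rwa [HAmb_one] at this

lemma rhoAmb_memA (hp : 1 ≤ p) (hw : w = (∑ i, m i) - q) (hw0 : 0 ≤ w)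
    {k : KVAmb p m q w} (hk : k ∈ KVSet p m q w) :
    rhoAmb p m q w k ∈ KVA p m q w := by
  obtain ⟨r0, r, h1, h2, h3, h4, h5, h6, h7⟩ := hk
  constructor
  · intro j
    exact ⟨fun h => if_pos h, fun h => if_neg h⟩
  · have hsum : ∑ i, (m i - w) ≤ q := by
      rw [Finset.sum_sub_distrib, Finset.sum_const, Finset.card_univ, Fintype.card_fin,
        nsmul_eq_mul]
      have hp1 : (1 : ℤ) ≤ (p : ℤ) := by exact_mod_cast hp
      nlinarith [mul_nonneg (sub_nonneg.2 hp1) hw0]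
    obtain ⟨c, hc, hcs⟩ := exists_mid p (fun i => m i - w) r q (fun i => (h3 i).1)
      hsum (le_trans h1 h4)
    exact ⟨c, hcs, fun i => ⟨(hc i).1, le_trans (hc i).2 (h3 i).2⟩,
      fun i j hj => h5 i j (lt_of_lt_of_le hj (hc i).2)⟩

lemma rhoAmb_eq_of_memA {k : KVAmb p m q w} (hk : k ∈ KVA p m q w) :
    rhoAmb p m q w k = k := by
  obtain ⟨h1, _⟩ := hk
  obtain ⟨kx, ky⟩ := k
  refine Prod.ext rfl (funext fun j => ?_)
  simp only [rhoAmb]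
  by_cases hj : (j : ℤ) = q
  · rw [if_pos hj, ((h1 j).1 hj).symm]
  · rw [if_neg hj, ((h1 j).2 hj).symm]


/-- With `p ≥ 1`, `w := m_1 + ⋯ + m_p − q ≥ 0`, the subset `A` is a
deformation retract of `KV_q(m_1,…,m_p)`: there are a continuous retraction
`ρ : KV_q(m_1,…,m_p) → A` with `ρ|_A = id` and a continuous homotopy
`H : KV_q(m_1,…,m_p) × [0,1] → KV_q(m_1,…,m_p)` from the identity to the composition of
`ρ` with the inclusion `A ↪ KV_q(m_1,…,m_p)`.  In particular, the inclusion
`A ↪ KV_q(m_1,…,m_p)` is a homotopy equivalence. -/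
theorem statement9 (p : ℕ) (hp : 1 ≤ p) (m : Fin p → ℤ) (q w : ℤ)
    (hw : w = (∑ i, m i) - q) (hw0 : 0 ≤ w) :
    ∃ ρ : ↥(KVSet p m q w) → ↥(KVSet p m q w),
      Continuous ρ ∧
      (∀ k, (↑(ρ k) : KVAmb p m q w) ∈ KVA p m q w) ∧
      (∀ k : ↥(KVSet p m q w), (↑k : KVAmb p m q w) ∈ KVA p m q w → ρ k = k) ∧
      (∃ H : ↥(KVSet p m q w) × unitInterval → ↥(KVSet p m q w),
        Continuous H ∧ (∀ k, H (k, 0) = k) ∧ (∀ k, H (k, 1) = ρ k)) ∧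
      ∃ he : ContinuousMap.HomotopyEquiv
          {k : KVAmb p m q w // k ∈ KVSet p m q w ∩ KVA p m q w} ↥(KVSet p m q w),
        ∀ x, (↑(he.toFun x) : KVAmb p m q w) = (↑x : KVAmb p m q w) := by
  classical
  refine ⟨fun k => ⟨rhoAmb p m q w k, rhoAmb_mem hw0 k.2⟩, ?_, ?_, ?_, ?_, ?_⟩
  · exact Continuous.subtype_mk (rhoAmb_continuous.comp continuous_subtype_val) _
  · exact fun k => rhoAmb_memA hp hw hw0 k.2
  · exact fun k hk => Subtype.ext (rhoAmb_eq_of_memA hk)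
  · refine ⟨fun kt => ⟨HAmb p m q w (↑kt.1, kt.2), HAmb_mem hw0 kt.1.2 kt.2⟩, ?_, ?_, ?_⟩
    · exact Continuous.subtype_mk (HAmb_continuous.comp
        ((continuous_subtype_val.comp continuous_fst).prodMk continuous_snd)) _
    · exact fun k => Subtype.ext (HAmb_zero _)
    · exact fun k => Subtype.ext (HAmb_one _)
  · -- homotopy equivalence
    set A := {k : KVAmb p m q w // k ∈ KVSet p m q w ∩ KVA p m q w}
    set X := ↥(KVSet p m q w)
    let incl : C(A, X) := ⟨fun a => ⟨a.1, a.2.1⟩,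
      Continuous.subtype_mk continuous_subtype_val _⟩
    let retr : C(X, A) := ⟨fun k => ⟨rhoAmb p m q w k,
      ⟨rhoAmb_mem hw0 k.2, rhoAmb_memA hp hw hw0 k.2⟩⟩,
      Continuous.subtype_mk (rhoAmb_continuous.comp continuous_subtype_val) _⟩
    refine ⟨⟨incl, retr, ?_, ?_⟩, fun x => rfl⟩
    · have heq : retr.comp incl = ContinuousMap.id A :=
        ContinuousMap.ext fun a => Subtype.ext (rhoAmb_eq_of_memA a.2.2)
      rw [heq]
    · have hH : ContinuousMap.Homotopy (ContinuousMap.id X) (incl.comp retr) :=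
        { toContinuousMap := ⟨fun tk => ⟨HAmb p m q w (↑tk.2, tk.1),
            HAmb_mem hw0 tk.2.2 tk.1⟩,
            Continuous.subtype_mk (HAmb_continuous.comp
              ((continuous_subtype_val.comp continuous_snd).prodMk continuous_fst)) _⟩,
          map_zero_left := fun k => Subtype.ext (HAmb_zero _),
          map_one_left := fun k => Subtype.ext (HAmb_one _) }
      exact ⟨hH.symm⟩


end
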